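/- Let μ ∈ ℝ, N ∈ ℕ, and A > 0. There exists a constant C > 0, depending only on μ, N and A, such that for every real sequence (a_l)_{l≥0} with a_0 = 0 (extended by a_l = 0 for l < 0) satisfying |a_l| ≤ A l^μ for all l ≥ 1 and |(Δ⁻)^{k₁}(Δ⁺)^{k₂} a_l| ≤ A l^{μ − 2(k₁+k₂)} for all l ≥ 1 and all k₁, k₂ ∈ ℕ with k₁ + k₂ ≤ 2N, the iterated sequence satisfies |(P^N a)_l| ≤ C l^{μ − 2N} for all l ≥ 1, where P is the operator on sequences defined by (Pa)_l = (l/(2l+1))(a_{l−1} − 2a_l + a_{l+1}) + (1/(2l+1))(a_{l+1} − a_l). -/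

import Mathlib

open Real

/-- Forward difference operator `Δ⁺ a l = a (l+1) - a l`. -/
def dplus (a : ℤ → ℝ) : ℤ → ℝ := fun l => a (l + 1) - a l

/-- Backward difference operator `Δ⁻ a l = a l - a (l-1)`. -/
def dminus (a : ℤ → ℝ) : ℤ → ℝ := fun l => a l - a (l - 1)

/-- The operator `P` on sequences:
`(Pa)_l = (l/(2l+1))(a_{l-1} - 2a_l + a_{l+1}) + (1/(2l+1))(a_{l+1} - a_l)` for `l ≥ 0`,
with the resulting sequence extended by `0` on negative indices. -/
noncomputable def Pop (a : ℤ → ℝ) : ℤ → ℝ := fun l =>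
  if l < 0 then 0
  else ((l : ℝ) / (2 * (l : ℝ) + 1)) * (a (l - 1) - 2 * a l + a (l + 1))
    + (1 / (2 * (l : ℝ) + 1)) * (a (l + 1) - a l)

open Finset

noncomputable def wt (l : ℤ) : ℝ := max (l : ℝ) 1
noncomputable def Ssym : ℤ → ℝ := fun m => 1 / (2 * (m : ℝ) + 1)
noncomputable def Rsym : ℤ → ℝ := fun m => (m : ℝ) / (2 * (m : ℝ) + 1)

lemma one_le_wt (l : ℤ) : 1 ≤ wt l := le_max_right _ _
lemma wt_pos (l : ℤ) : 0 < wt l := lt_of_lt_of_le one_pos (one_le_wt l)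
lemma wt_mono {l l' : ℤ} (h : l ≤ l') : wt l ≤ wt l' := by
  unfold wt; exact max_le_max (by exact_mod_cast h) le_rfl
lemma wt_of_nonpos {l : ℤ} (h : l ≤ 0) : wt l = 1 := by
  unfold wt
  have : (l : ℝ) ≤ 1 := by exact_mod_cast h.trans zero_le_one
  simp [max_eq_right this]
lemma wt_of_pos {l : ℤ} (h : 1 ≤ l) : wt l = (l : ℝ) := by
  unfold wt
  have : (1:ℝ) ≤ (l:ℝ) := by exact_mod_cast h
  simp [max_eq_left this]
lemma wt_le_two_mul {l : ℤ} : wt l ≤ 2 * wt (l - 1) := by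
  rcases le_or_gt l 2 with h | h
  · have h1 : wt l ≤ 2 := by
      unfold wt
      have : (l:ℝ) ≤ 2 := by exact_mod_cast h
      exact max_le this one_le_two
    calc wt l ≤ 2 := h1
      _ ≤ 2 * wt (l-1) := by nlinarith [one_le_wt (l-1)]
  · have h1 : (1:ℤ) ≤ l - 1 := by omega
    rw [wt_of_pos (by omega), wt_of_pos h1]
    have : (2:ℝ) < (l:ℝ) := by exact_mod_cast h
    push_cast; linarith

lemma dplus_iter_add (k : ℕ) : ∀ (u v : ℤ → ℝ) (l : ℤ),
    dplus^[k] (fun m => u m + v m) l = dplus^[k] u l + dplus^[k] v l := by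
  induction k with
  | zero => intro u v l; simp
  | succ k ih =>
    intro u v l
    rw [Function.iterate_succ_apply, Function.iterate_succ_apply, Function.iterate_succ_apply]
    have : dplus (fun m => u m + v m) = fun m => dplus u m + dplus v m := by
      funext m; simp [dplus]; ring
    rw [this, ih]

lemma dplus_iter_const_mul (k : ℕ) : ∀ (c : ℝ) (u : ℤ → ℝ) (l : ℤ),
    dplus^[k] (fun m => c * u m) l = c * dplus^[k] u l := by
  induction k with
  | zero => intro c u l; simp
  | succ k ih =>
    intro c u l
    rw [Function.iterate_succ_apply, Function.iterate_succ_apply]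
    have : dplus (fun m => c * u m) = fun m => c * dplus u m := by
      funext m; simp [dplus]; ring
    rw [this, ih]

lemma dplus_iter_shift (k : ℕ) : ∀ (f : ℤ → ℝ) (c l : ℤ),
    dplus^[k] (fun m => f (m + c)) l = dplus^[k] f (l + c) := by
  induction k with
  | zero => intro f c l; simp
  | succ k ih =>
    intro f c l
    rw [Function.iterate_succ_apply, Function.iterate_succ_apply]
    have : dplus (fun m => f (m + c)) = fun m => dplus f (m + c) := by
      funext m; simp [dplus]; ring_nf
    rw [this, ih]

lemma dminus_iter (k : ℕ) : ∀ (f : ℤ → ℝ) (l : ℤ),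
    dminus^[k] f l = dplus^[k] f (l - k) := by
  induction k with
  | zero => intro f l; simp
  | succ k ih =>
    intro f l
    have h2 : dminus f = fun m => dplus f (m + (-1)) := by
      funext m; simp [dminus, dplus]; ring_nf
    rw [Function.iterate_succ_apply, ih, h2, dplus_iter_shift,
      ← Function.iterate_succ_apply]
    have h4 : l - (↑(k+1):ℤ) = -1 + (l - ↑k) := by push_cast; ring
    rw [h4]
    have h5 : l - (k:ℤ) + -1 = -1 + (l - (k:ℤ)) := by ring
    rw [h5]

lemma dplus_iter_congr (k : ℕ) : ∀ (g h : ℤ → ℝ) (l : ℤ),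
    (∀ m : ℤ, l ≤ m → m ≤ l + k → g m = h m) → dplus^[k] g l = dplus^[k] h l := by
  induction k with
  | zero => intro g h l hm; simpa using hm l le_rfl (by simp)
  | succ k ih =>
    intro g h l hm
    rw [Function.iterate_succ_apply, Function.iterate_succ_apply]
    apply ih
    intro m h1 h2
    simp only [dplus]
    rw [hm m h1 (by omega), hm (m+1) (by omega) (by omega)]

lemma dplus_iter_crude (k : ℕ) : ∀ (g : ℤ → ℝ) (M : ℝ) (l : ℤ),
    (∀ m : ℤ, l ≤ m → m ≤ l + k → |g m| ≤ M) → |dplus^[k] g l| ≤ 2 ^ k * M := by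
  induction k with
  | zero => intro g M l hm; simpa using hm l le_rfl (by simp)
  | succ k ih =>
    intro g M l hm
    rw [Function.iterate_succ_apply]
    calc |dplus^[k] (dplus g) l| ≤ 2 ^ k * (2 * M) := by
          apply ih
          intro m h1 h2
          simp only [dplus]
          calc |g (m+1) - g m| ≤ |g (m+1)| + |g m| := abs_sub _ _
            _ ≤ M + M := add_le_add (hm (m+1) (by omega) (by omega)) (hm m h1 (by omega))
            _ = 2 * M := by ring
      _ = 2 ^ (k+1) * M := by ring

lemma dplus_mul (f g : ℤ → ℝ) :
    dplus (fun m => f m * g m) = fun m => f (m+1) * dplus g m + dplus f m * g m := by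
  funext m; simp [dplus]; ring

lemma dplus_iter_mul : ∀ (k : ℕ) (f g : ℤ → ℝ) (l : ℤ),
    dplus^[k] (fun m => f m * g m) l
      = ∑ i ∈ Finset.range (k+1),
          (k.choose i : ℝ) * (dplus^[i] f (l + (k : ℤ) - (i : ℤ)) * dplus^[k - i] g l) := by
  intro k
  induction k with
  | zero => intro f g l; simp
  | succ k ih =>
    intro f g l
    rw [Function.iterate_succ_apply, dplus_mul, dplus_iter_add,
        ih (fun m => f (m+1)) (dplus g) l, ih (dplus f) g l]
    set A : ℕ → ℝ := fun i => dplus^[i] f (l + (k:ℤ) + 1 - (i:ℤ)) * dplus^[k+1-i] g l with hA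
    have hfirst : ∑ i ∈ Finset.range (k+1),
        (k.choose i : ℝ) * (dplus^[i] (fun m => f (m+1)) (l + (k:ℤ) - i) * dplus^[k-i] (dplus g) l)
        = ∑ i ∈ Finset.range (k+1), (k.choose i : ℝ) * A i := by
      apply Finset.sum_congr rfl
      intro i hi
      have hik : i ≤ k := Nat.lt_succ_iff.mp (Finset.mem_range.mp hi)
      congr 1
      rw [hA]
      simp only []
      rw [dplus_iter_shift i f 1 _, ← Function.iterate_succ_apply]
      have h1 : (k - i).succ = k + 1 - i := by omega
      have h2 : l + (k:ℤ) - i + 1 = l + (k:ℤ) + 1 - i := by ring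
      rw [h1, h2]
    have hsecond : ∑ i ∈ Finset.range (k+1),
        (k.choose i : ℝ) * (dplus^[i] (dplus f) (l + (k:ℤ) - i) * dplus^[k-i] g l)
        = ∑ i ∈ Finset.range (k+1), (k.choose i : ℝ) * A (i+1) := by
      apply Finset.sum_congr rfl
      intro i hi
      have hik : i ≤ k := Nat.lt_succ_iff.mp (Finset.mem_range.mp hi)
      congr 1
      rw [hA]
      simp only []
      rw [← Function.iterate_succ_apply]
      have h1 : k - i = k + 1 - (i+1) := by omega
      have h2 : l + (k:ℤ) - i = l + (k:ℤ) + 1 - (↑(i+1):ℤ) := by push_cast; ring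
      rw [h1, h2]
    rw [hfirst, hsecond]
    have hgoal : ∑ i ∈ Finset.range (k+1+1),
        ((k+1).choose i : ℝ) * (dplus^[i] f (l + ((k+1:ℕ) : ℤ) - (i:ℤ)) * dplus^[k+1-i] g l)
        = ∑ i ∈ Finset.range (k+2), ((k+1).choose i : ℝ) * A i := by
      apply Finset.sum_congr rfl
      intro i hi
      rw [hA]
      simp only []
      congr 3
      push_cast; ring
    rw [hgoal]
    have e1 : ∑ i ∈ Finset.range (k+2), (((k+1).choose i : ℝ)) * A i
        = ∑ i ∈ Finset.range (k+1), (((k+1).choose (i+1) : ℝ)) * A (i+1)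
          + ((k+1).choose 0 : ℝ) * A 0 :=
      Finset.sum_range_succ' _ (k+1)
    have e2 : ∑ i ∈ Finset.range (k+2), ((k.choose i : ℝ)) * A i
        = ∑ i ∈ Finset.range (k+1), ((k.choose (i+1) : ℝ)) * A (i+1)
          + (k.choose 0 : ℝ) * A 0 :=
      Finset.sum_range_succ' _ (k+1)
    have e3 : ∑ i ∈ Finset.range (k+2), ((k.choose i : ℝ)) * A i
        = ∑ i ∈ Finset.range (k+1), ((k.choose i : ℝ)) * A i
          + (k.choose (k+1) : ℝ) * A (k+1) :=
      Finset.sum_range_succ _ (k+1)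
    have e4 : ∑ i ∈ Finset.range (k+1), (((k+1).choose (i+1):ℝ)) * A (i+1)
        = ∑ i ∈ Finset.range (k+1), ((k.choose i:ℝ)) * A (i+1)
          + ∑ i ∈ Finset.range (k+1), ((k.choose (i+1):ℝ)) * A (i+1) := by
      rw [← Finset.sum_add_distrib]
      apply Finset.sum_congr rfl
      intro i _
      rw [Nat.choose_succ_succ]
      push_cast; ring
    rw [e1, e4]
    rw [Nat.choose_succ_self] at e3
    simp only [Nat.choose_zero_right, Nat.cast_one, one_mul, Nat.cast_zero, zero_mul,
      add_zero] at e1 e2 e3 ⊢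
    linarith [e2, e3]

lemma fac_ne_zero (m : ℤ) (j : ℕ) : (2 * (m:ℝ) + 2 * (j:ℝ) + 1) ≠ 0 := by
  have h : (2 * (m:ℝ) + 2 * (j:ℝ) + 1) = ((2 * (m + j) + 1 : ℤ) : ℝ) := by push_cast; ring
  rw [h]
  exact_mod_cast (by omega : (2 * (m + (j:ℤ)) + 1 : ℤ) ≠ 0)

lemma prod_ne_zero (m : ℤ) (n : ℕ) :
    (∏ j ∈ Finset.range n, (2 * (m:ℝ) + 2 * (j:ℝ) + 1)) ≠ 0 :=
  Finset.prod_ne_zero_iff.mpr fun j _ => fac_ne_zero m j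

lemma Ssym_iter : ∀ (k : ℕ) (m : ℤ),
    dplus^[k] Ssym m
      = (-2 : ℝ)^k * (k.factorial : ℝ) / ∏ j ∈ Finset.range (k+1), (2 * (m:ℝ) + 2 * (j:ℝ) + 1) := by
  intro k
  induction k with
  | zero => intro m; simp [Ssym]
  | succ k ih =>
    intro m
    rw [Function.iterate_succ_apply']
    have hd : dplus (dplus^[k] Ssym) m = dplus^[k] Ssym (m+1) - dplus^[k] Ssym m := rfl
    rw [hd, ih, ih]
    set c : ℝ := (-2:ℝ)^k * (k.factorial : ℝ) with hc
    set Q : ℝ := ∏ j ∈ Finset.range (k+2), (2 * (m:ℝ) + 2 * (j:ℝ) + 1) with hQ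
    have hQ1 : Q = (∏ j ∈ Finset.range (k+1), (2 * ((m+1:ℤ):ℝ) + 2 * (j:ℝ) + 1)) * (2*(m:ℝ)+1) := by
      rw [hQ, Finset.prod_range_succ']
      congr 1
      · apply Finset.prod_congr rfl
        intro j _
        push_cast; ring
      · norm_num
    have hQ2 : Q = (∏ j ∈ Finset.range (k+1), (2 * (m:ℝ) + 2 * (j:ℝ) + 1)) * (2*(m:ℝ) + 2*((k+1:ℕ):ℝ) + 1) := by
      rw [hQ, Finset.prod_range_succ]
    have hP1 := prod_ne_zero (m+1) (k+1)
    have hP2 := prod_ne_zero m (k+1)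
    have hQ0 : Q ≠ 0 := prod_ne_zero m (k+2)
    have a1 : c / (∏ j ∈ Finset.range (k+1), (2 * ((m+1:ℤ):ℝ) + 2 * (j:ℝ) + 1))
        = c * (2*(m:ℝ)+1) / Q := by
      rw [div_eq_div_iff hP1 hQ0, hQ1]; ring
    have a2 : c / (∏ j ∈ Finset.range (k+1), (2 * (m:ℝ) + 2 * (j:ℝ) + 1))
        = c * (2*(m:ℝ) + 2*((k+1:ℕ):ℝ) + 1) / Q := by
      rw [div_eq_div_iff hP2 hQ0, hQ2]; ring
    rw [a1, a2, div_sub_div_same]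
    congr 1
    have hfac : ((k+1).factorial : ℝ) = ((k+1:ℕ):ℝ) * (k.factorial : ℝ) := by
      rw [Nat.factorial_succ]; push_cast; ring
    rw [hc, hfac]
    push_cast
    ring

lemma rpow_anti {x y : ℝ} (hx : 0 < x) (hxy : x ≤ y) {e : ℝ} (he : e ≤ 0) : y ^ e ≤ x ^ e :=
  Real.rpow_le_rpow_of_nonpos hx hxy he

lemma S_bound (i : ℕ) (m : ℤ) (hm : 0 ≤ m) :
    |dplus^[i] Ssym m| ≤ 2^i * (i.factorial : ℝ) * wt m ^ (-(i:ℝ)-1) := by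
  have hw := wt_pos m
  have hwpow : (0:ℝ) < wt m ^ (((i+1:ℕ)):ℝ) := Real.rpow_pos_of_pos hw _
  have h1 : wt m ^ (((i+1:ℕ)):ℝ) ≤ ∏ j ∈ Finset.range (i+1), (2*(m:ℝ)+2*(j:ℝ)+1) := by
    rw [Real.rpow_natCast]
    calc wt m ^ (i+1) = ∏ _j ∈ Finset.range (i+1), wt m := by
          rw [Finset.prod_const, Finset.card_range]
      _ ≤ ∏ j ∈ Finset.range (i+1), (2*(m:ℝ)+2*(j:ℝ)+1) := by
          apply Finset.prod_le_prod (fun j _ => le_of_lt hw)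
          intro j _
          have hm' : (0:ℝ) ≤ (m:ℝ) := by exact_mod_cast hm
          have hj : (0:ℝ) ≤ (j:ℝ) := Nat.cast_nonneg j
          apply max_le <;> nlinarith
  have hPpos : (0:ℝ) < ∏ j ∈ Finset.range (i+1), (2*(m:ℝ)+2*(j:ℝ)+1) :=
    lt_of_lt_of_le hwpow h1
  rw [Ssym_iter, abs_div]
  have hnum : |(-2:ℝ)^i * (i.factorial:ℝ)| = 2^i * (i.factorial:ℝ) := by
    rw [abs_mul, abs_pow, abs_neg, abs_two, Nat.abs_cast]
  rw [hnum, abs_of_pos hPpos]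
  have hexp : wt m ^ (-(i:ℝ)-1) = (wt m ^ (((i+1:ℕ)):ℝ))⁻¹ := by
    rw [← Real.rpow_neg (le_of_lt hw)]
    congr 1
    push_cast; ring
  have hrhs : 2^i * (i.factorial:ℝ) * wt m ^ (-(i:ℝ)-1)
      = 2^i * (i.factorial:ℝ) / (wt m ^ (((i+1:ℕ)):ℝ)) := by
    rw [hexp, div_eq_mul_inv]
  rw [hrhs]
  gcongr

lemma dplus_iter_zero (j : ℕ) (l : ℤ) : dplus^[j] (fun _ => (0:ℝ)) l = 0 := by
  have h : (fun _ : ℤ => (0:ℝ)) = fun m => (0:ℝ) * (fun _ : ℤ => (0:ℝ)) m := by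
    funext m; ring
  rw [h, dplus_iter_const_mul]
  ring

lemma Rsym_eq : Rsym = fun m => 1/2 + (-(1/2)) * Ssym m := by
  funext m
  have h0 : (2*(m:ℝ)+1) ≠ 0 := by
    have := fac_ne_zero m 0; simpa using this
  simp only [Rsym, Ssym]
  field_simp
  linear_combination mul_inv_cancel₀ h0

lemma R_bound (i : ℕ) (m : ℤ) (hm : 0 ≤ m) :
    |dplus^[i] Rsym m| ≤ 2^i * (i.factorial : ℝ) * wt m ^ (-(i:ℝ)) := by
  have hw := wt_pos m
  cases i with
  | zero =>
    simp only [Function.iterate_zero, id_eq, pow_zero, Nat.factorial_zero, Nat.cast_one,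
      CharP.cast_eq_zero, neg_zero, Real.rpow_zero, one_mul, mul_one]
    have hm' : (0:ℝ) ≤ (m:ℝ) := by exact_mod_cast hm
    have h0 : (0:ℝ) < 2*(m:ℝ)+1 := by linarith
    rw [Rsym, abs_div, abs_of_nonneg hm', abs_of_pos h0, div_le_one h0]
    linarith
  | succ i =>
    have hsplit : ∀ l : ℤ, dplus^[i+1] Rsym l = (-(1/2)) * dplus^[i+1] Ssym l := by
      intro l
      rw [Rsym_eq]
      have : (fun m => 1/2 + (-(1/2)) * Ssym m)
          = fun m => (fun _ : ℤ => (1/2 : ℝ)) m + (fun m' => (-(1/2)) * Ssym m') m := rfl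
      rw [this, dplus_iter_add, dplus_iter_const_mul]
      have hc : dplus^[i+1] (fun _ : ℤ => (1/2:ℝ)) l = 0 := by
        rw [Function.iterate_succ_apply]
        have : dplus (fun _ : ℤ => (1/2:ℝ)) = fun _ => (0:ℝ) := by
          funext m; simp [dplus]
        rw [this, dplus_iter_zero]
      rw [hc, zero_add]
    rw [hsplit]
    rw [abs_mul]
    have habs : |(-(1/2) : ℝ)| = 1/2 := by norm_num
    rw [habs]
    calc 1/2 * |dplus^[i+1] Ssym m|
        ≤ 1/2 * (2^(i+1) * ((i+1).factorial : ℝ) * wt m ^ (-((i+1:ℕ):ℝ)-1)) := by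
          have := S_bound (i+1) m hm
          linarith
      _ ≤ 2^(i+1) * ((i+1).factorial : ℝ) * wt m ^ (-((i+1:ℕ):ℝ)) := by
          have hle : wt m ^ (-((i+1:ℕ):ℝ)-1) ≤ wt m ^ (-((i+1:ℕ):ℝ)) :=
            Real.rpow_le_rpow_of_exponent_le (one_le_wt m) (by linarith)
          have hpos : (0:ℝ) < 2^(i+1) * ((i+1).factorial : ℝ) := by positivity
          nlinarith [Real.rpow_pos_of_pos hw (-((i+1:ℕ):ℝ)-1)]

lemma wt_shift_rpow (l : ℤ) (e : ℝ) : wt (l-1) ^ e ≤ 2^|e| * wt l ^ e := by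
  have h1 := wt_pos (l-1)
  have h2 := wt_pos l
  rcases le_or_gt 0 e with he | he
  · have hb : wt (l-1) ^ e ≤ wt l ^ e :=
      Real.rpow_le_rpow (le_of_lt h1) (wt_mono (by omega)) he
    have h3 : (1:ℝ) ≤ 2^|e| := by
      rw [← Real.rpow_zero 2]
      exact Real.rpow_le_rpow_of_exponent_le one_le_two (abs_nonneg e)
    nlinarith [Real.rpow_pos_of_pos h2 e]
  · have hhalf : wt l / 2 ≤ wt (l-1) := by
      have := wt_le_two_mul (l := l); linarith
    have hb : wt (l-1) ^ e ≤ (wt l / 2) ^ e :=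
      rpow_anti (by linarith) hhalf (le_of_lt he)
    have hsplit : (wt l / 2) ^ e = wt l ^ e / 2 ^ e :=
      Real.div_rpow (le_of_lt h2) (by norm_num) e
    rw [abs_of_neg he, Real.rpow_neg (by norm_num : (0:ℝ) ≤ 2)]
    calc wt (l-1)^e ≤ (wt l / 2)^e := hb
      _ = wt l ^ e / 2^e := hsplit
      _ = (2^e)⁻¹ * wt l ^ e := by ring

lemma wt_rpow_le_of_le {x D : ℝ} (hx : 1 ≤ x) (hD : x ≤ D) (e : ℝ) : x ^ e ≤ D ^ |e| := by
  have hD1 : (1:ℝ) ≤ D := hx.trans hD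
  rcases le_or_gt 0 e with he | he
  · rw [abs_of_nonneg he]
    exact Real.rpow_le_rpow (by linarith) hD he
  · calc x ^ e ≤ x ^ (0:ℝ) := Real.rpow_le_rpow_of_exponent_le hx (le_of_lt he)
      _ = 1 := Real.rpow_zero x
      _ = D ^ (0:ℝ) := (Real.rpow_zero D).symm
      _ ≤ D ^ |e| := Real.rpow_le_rpow_of_exponent_le hD1 (abs_nonneg e)

lemma dplus_two (b : ℤ → ℝ) (x : ℤ) : dplus^[2] b x = b (x+2) - 2*b (x+1) + b x := by
  have h2 : (2:ℕ) = 0 + 1 + 1 := rfl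
  rw [h2, Function.iterate_succ_apply', Function.iterate_succ_apply',
    Function.iterate_zero_apply]
  simp only [dplus]
  have e1 : x + 1 + 1 = x + 2 := by ring
  rw [e1]
  ring

noncomputable def cs (i : ℕ) : ℝ := 2^i * (i.factorial : ℝ)

lemma cs_nonneg (i : ℕ) : 0 ≤ cs i := by unfold cs; positivity

lemma cs_R_bound (i : ℕ) (m : ℤ) (hm : 0 ≤ m) :
    |dplus^[i] Rsym m| ≤ cs i * wt m ^ (-(i:ℝ)) := R_bound i m hm

lemma cs_S_bound (i : ℕ) (m : ℤ) (hm : 0 ≤ m) :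
    |dplus^[i] Ssym m| ≤ cs i * wt m ^ (-(i:ℝ)-1) := S_bound i m hm

lemma key (ν : ℝ) (k : ℕ) : ∃ c > 0, ∀ C : ℝ, 0 ≤ C → ∀ b : ℤ → ℝ,
    (∀ j : ℕ, j ≤ k + 2 → ∀ x : ℤ, |dplus^[j] b x| ≤ C * wt x ^ (ν - (j:ℝ))) →
    ∀ l : ℤ, |dplus^[k] (Pop b) l| ≤ c * C * wt l ^ (ν - 2 - (k:ℝ)) := by
  set Dk : ℝ := max (k:ℝ) 1 with hDk
  have hDk1 : (1:ℝ) ≤ Dk := le_max_right _ _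
  set dR : ℕ → ℝ := fun i => (k.choose i : ℝ) * cs i * 2 ^ |ν - ((k:ℝ) - i + 2)| with hdR
  set dS : ℕ → ℝ := fun i => (k.choose i : ℝ) * cs i with hdS
  have hdR0 : ∀ i, 0 ≤ dR i := by
    intro i; rw [hdR]
    have := cs_nonneg i
    positivity
  have hdS0 : ∀ i, 0 ≤ dS i := by
    intro i; rw [hdS]
    have := cs_nonneg i
    positivity
  set cL : ℝ := ∑ i ∈ Finset.range (k+1), (dR i + dS i) with hcL
  set cCr : ℝ := 2^k * (Dk ^ |ν-2| + Dk ^ |ν-1|) with hcCr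
  have hcL0 : 0 ≤ cL := Finset.sum_nonneg fun i _ => add_nonneg (hdR0 i) (hdS0 i)
  have hcCr0 : 0 ≤ cCr := by
    rw [hcCr]
    have h1 : (0:ℝ) < Dk := lt_of_lt_of_le one_pos hDk1
    positivity
  refine ⟨cL + cCr + 1, by linarith, ?_⟩
  intro C hC b hb l
  have hwl := wt_pos l
  have hpow : (0:ℝ) < wt l ^ (ν - 2 - (k:ℝ)) := Real.rpow_pos_of_pos hwl _
  rcases le_or_gt 0 l with hl | hl
  · -- Leibniz case
    have hrep : ∀ m : ℤ, 0 ≤ m → Pop b m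
        = Rsym m * dplus^[2] b (m + (-1)) + Ssym m * dplus^[1] b m := by
      intro m hm
      rw [dplus_two]
      have h1 : dplus^[1] b m = b (m+1) - b m := by simp [dplus]
      rw [h1]
      have e1 : m + -1 + 2 = m + 1 := by ring
      have e2 : m + -1 + 1 = m := by ring
      rw [e1, e2]
      simp only [Pop, if_neg (not_lt.mpr hm), Rsym, Ssym]
      have e3 : m + -1 = m - 1 := by ring
      rw [e3]
      ring
    have hcongr : dplus^[k] (Pop b) l
        = dplus^[k] (fun m => Rsym m * dplus^[2] b (m + (-1)) + Ssym m * dplus^[1] b m) l := by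
      apply dplus_iter_congr
      intro m h1 h2
      exact hrep m (by omega)
    have main_eq : dplus^[k] (Pop b) l
        = (∑ i ∈ Finset.range (k+1), (k.choose i : ℝ)
            * (dplus^[i] Rsym (l + (k:ℤ) - (i:ℤ)) * dplus^[k-i+2] b (l + (-1))))
          + (∑ i ∈ Finset.range (k+1), (k.choose i : ℝ)
            * (dplus^[i] Ssym (l + (k:ℤ) - (i:ℤ)) * dplus^[k-i+1] b l)) := by
      rw [hcongr]
      refine (dplus_iter_add k (fun m => Rsym m * dplus^[2] b (m + (-1)))
        (fun m => Ssym m * dplus^[1] b m) l).trans ?_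
      congr 1
      · refine (dplus_iter_mul k Rsym (fun m => dplus^[2] b (m + (-1))) l).trans ?_
        apply Finset.sum_congr rfl
        intro i _
        rw [dplus_iter_shift (k-i) (dplus^[2] b) (-1) l,
          ← Function.iterate_add_apply dplus (k-i) 2 b]
      · refine (dplus_iter_mul k Ssym (dplus^[1] b) l).trans ?_
        apply Finset.sum_congr rfl
        intro i _
        rw [← Function.iterate_add_apply dplus (k-i) 1 b]
    rw [main_eq]
    have hRsum : |∑ i ∈ Finset.range (k+1), (k.choose i : ℝ)
            * (dplus^[i] Rsym (l + (k:ℤ) - (i:ℤ)) * dplus^[k-i+2] b (l + (-1)))|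
        ≤ ∑ i ∈ Finset.range (k+1), dR i * (C * wt l ^ (ν - 2 - (k:ℝ))) := by
      refine (Finset.abs_sum_le_sum_abs _ _).trans ?_
      apply Finset.sum_le_sum
      intro i hi
      have hik : i ≤ k := Nat.lt_succ_iff.mp (Finset.mem_range.mp hi)
      set e' : ℝ := ν - ((k:ℝ) - i + 2) with he'
      have hpt : (0:ℤ) ≤ l + (k:ℤ) - (i:ℤ) := by
        have : (i:ℤ) ≤ (k:ℤ) := by exact_mod_cast hik
        omega
      have A1 : |dplus^[i] Rsym (l + (k:ℤ) - (i:ℤ))| ≤ cs i * wt l ^ (-(i:ℝ)) := by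
        refine (cs_R_bound i _ hpt).trans ?_
        have h1 : wt (l + (k:ℤ) - (i:ℤ)) ^ (-(i:ℝ)) ≤ wt l ^ (-(i:ℝ)) := by
          apply rpow_anti hwl (wt_mono ?_) (neg_nonpos.mpr (Nat.cast_nonneg i))
          have : (0:ℤ) ≤ (k:ℤ) - (i:ℤ) := by
            have : (i:ℤ) ≤ (k:ℤ) := by exact_mod_cast hik
            omega
          omega
        nlinarith [cs_nonneg i]
      have ecast : ((k-i+2:ℕ):ℝ) = (k:ℝ) - i + 2 := by
        push_cast [Nat.cast_sub hik]
        ring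
      have A2 : |dplus^[k-i+2] b (l + (-1))| ≤ C * (2^|e'| * wt l ^ e') := by
        have hb2 := hb (k-i+2) (by omega) (l + (-1))
        rw [ecast, ← he'] at hb2
        refine hb2.trans ?_
        have e4 : l + (-1) = l - 1 := by ring
        rw [e4]
        have := wt_shift_rpow l e'
        nlinarith [this]
      have hXY : |dplus^[i] Rsym (l + (k:ℤ) - (i:ℤ))| * |dplus^[k-i+2] b (l + (-1))|
          ≤ (cs i * wt l ^ (-(i:ℝ))) * (C * (2^|e'| * wt l ^ e')) := by
        apply mul_le_mul A1 A2 (abs_nonneg _)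
        have := cs_nonneg i
        positivity
      calc |(k.choose i : ℝ) * (dplus^[i] Rsym (l + (k:ℤ) - (i:ℤ)) * dplus^[k-i+2] b (l + (-1)))|
          = (k.choose i : ℝ) * (|dplus^[i] Rsym (l + (k:ℤ) - (i:ℤ))| * |dplus^[k-i+2] b (l + (-1))|) := by
            rw [abs_mul, abs_mul, Nat.abs_cast]
        _ ≤ (k.choose i : ℝ) * ((cs i * wt l ^ (-(i:ℝ))) * (C * (2^|e'| * wt l ^ e'))) :=
            mul_le_mul_of_nonneg_left hXY (Nat.cast_nonneg _)
        _ = dR i * (C * (wt l ^ (-(i:ℝ)) * wt l ^ e')) := by rw [hdR]; ring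
        _ = dR i * (C * wt l ^ (ν - 2 - (k:ℝ))) := by
            rw [← Real.rpow_add hwl]
            congr 2
            rw [he']
            ring
    have hSsum : |∑ i ∈ Finset.range (k+1), (k.choose i : ℝ)
            * (dplus^[i] Ssym (l + (k:ℤ) - (i:ℤ)) * dplus^[k-i+1] b l)|
        ≤ ∑ i ∈ Finset.range (k+1), dS i * (C * wt l ^ (ν - 2 - (k:ℝ))) := by
      refine (Finset.abs_sum_le_sum_abs _ _).trans ?_
      apply Finset.sum_le_sum
      intro i hi
      have hik : i ≤ k := Nat.lt_succ_iff.mp (Finset.mem_range.mp hi)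
      set e' : ℝ := ν - ((k:ℝ) - i + 1) with he'
      have hpt : (0:ℤ) ≤ l + (k:ℤ) - (i:ℤ) := by
        have : (i:ℤ) ≤ (k:ℤ) := by exact_mod_cast hik
        omega
      have A1 : |dplus^[i] Ssym (l + (k:ℤ) - (i:ℤ))| ≤ cs i * wt l ^ (-(i:ℝ)-1) := by
        refine (cs_S_bound i _ hpt).trans ?_
        have h1 : wt (l + (k:ℤ) - (i:ℤ)) ^ (-(i:ℝ)-1) ≤ wt l ^ (-(i:ℝ)-1) := by
          apply rpow_anti hwl (wt_mono ?_) ?_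
          swap
          · have h9 : (0:ℝ) ≤ (i:ℝ) := Nat.cast_nonneg i
            linarith
          have : (0:ℤ) ≤ (k:ℤ) - (i:ℤ) := by
            have : (i:ℤ) ≤ (k:ℤ) := by exact_mod_cast hik
            omega
          omega
        nlinarith [cs_nonneg i]
      have ecast : ((k-i+1:ℕ):ℝ) = (k:ℝ) - i + 1 := by
        push_cast [Nat.cast_sub hik]
        ring
      have A2 : |dplus^[k-i+1] b l| ≤ C * wt l ^ e' := by
        have hb2 := hb (k-i+1) (by omega) l
        rw [ecast, ← he'] at hb2
        exact hb2
      have hXY : |dplus^[i] Ssym (l + (k:ℤ) - (i:ℤ))| * |dplus^[k-i+1] b l|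
          ≤ (cs i * wt l ^ (-(i:ℝ)-1)) * (C * wt l ^ e') := by
        apply mul_le_mul A1 A2 (abs_nonneg _)
        have := cs_nonneg i
        positivity
      calc |(k.choose i : ℝ) * (dplus^[i] Ssym (l + (k:ℤ) - (i:ℤ)) * dplus^[k-i+1] b l)|
          = (k.choose i : ℝ) * (|dplus^[i] Ssym (l + (k:ℤ) - (i:ℤ))| * |dplus^[k-i+1] b l|) := by
            rw [abs_mul, abs_mul, Nat.abs_cast]
        _ ≤ (k.choose i : ℝ) * ((cs i * wt l ^ (-(i:ℝ)-1)) * (C * wt l ^ e')) :=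
            mul_le_mul_of_nonneg_left hXY (Nat.cast_nonneg _)
        _ = dS i * (C * (wt l ^ (-(i:ℝ)-1) * wt l ^ e')) := by rw [hdS]; ring
        _ = dS i * (C * wt l ^ (ν - 2 - (k:ℝ))) := by
            rw [← Real.rpow_add hwl]
            congr 2
            rw [he']
            ring
    calc |(∑ i ∈ Finset.range (k+1), (k.choose i : ℝ)
            * (dplus^[i] Rsym (l + (k:ℤ) - (i:ℤ)) * dplus^[k-i+2] b (l + (-1))))
          + (∑ i ∈ Finset.range (k+1), (k.choose i : ℝ)
            * (dplus^[i] Ssym (l + (k:ℤ) - (i:ℤ)) * dplus^[k-i+1] b l))|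
        ≤ (∑ i ∈ Finset.range (k+1), dR i * (C * wt l ^ (ν - 2 - (k:ℝ))))
          + (∑ i ∈ Finset.range (k+1), dS i * (C * wt l ^ (ν - 2 - (k:ℝ)))) := by
          refine (abs_add_le _ _).trans ?_
          exact add_le_add hRsum hSsum
      _ = cL * (C * wt l ^ (ν - 2 - (k:ℝ))) := by
          rw [hcL, Finset.sum_add_distrib, add_mul, Finset.sum_mul, Finset.sum_mul]
      _ ≤ (cL + cCr + 1) * C * wt l ^ (ν - 2 - (k:ℝ)) := by
          nlinarith [mul_nonneg hC (le_of_lt hpow)]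
  · -- crude case, l ≤ -1
    have hwt1 : wt l = 1 := wt_of_nonpos (by omega)
    have hM : ∀ m : ℤ, l ≤ m → m ≤ l + k →
        |Pop b m| ≤ C * (Dk ^ |ν-2| + Dk ^ |ν-1|) := by
      intro m hm1 hm2
      have hDkpos : (0:ℝ) < Dk := lt_of_lt_of_le one_pos hDk1
      have hMnn : (0:ℝ) ≤ C * (Dk ^ |ν-2| + Dk ^ |ν-1|) := by positivity
      rcases lt_or_ge m 0 with hm0 | hm0
      · simp only [Pop, if_pos hm0, abs_zero]
        exact hMnn
      · have hrep : Pop b m = Rsym m * dplus^[2] b (m + (-1)) + Ssym m * dplus^[1] b m := by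
          rw [dplus_two]
          have h1 : dplus^[1] b m = b (m+1) - b m := by simp [dplus]
          rw [h1]
          have e1 : m + -1 + 2 = m + 1 := by ring
          have e2 : m + -1 + 1 = m := by ring
          rw [e1, e2]
          simp only [Pop, if_neg (not_lt.mpr hm0), Rsym, Ssym]
          have e3 : m + -1 = m - 1 := by ring
          rw [e3]
          ring
        rw [hrep]
        have hmk : m ≤ (k:ℤ) := by omega
        have hR1 : |Rsym m| ≤ 1 := by
          have hm' : (0:ℝ) ≤ (m:ℝ) := by exact_mod_cast hm0
          have hpos : (0:ℝ) < 2*(m:ℝ)+1 := by linarith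
          simp only [Rsym]
          rw [abs_div, abs_of_nonneg hm', abs_of_pos hpos, div_le_one hpos]
          linarith
        have hS1 : |Ssym m| ≤ 1 := by
          have hm' : (0:ℝ) ≤ (m:ℝ) := by exact_mod_cast hm0
          have hpos : (0:ℝ) < 2*(m:ℝ)+1 := by linarith
          simp only [Ssym]
          rw [abs_div, abs_one, abs_of_pos hpos, div_le_one hpos]
          linarith
        have hb2 : |dplus^[2] b (m + (-1))| ≤ C * Dk ^ |ν-2| := by
          have h1 := hb 2 (by omega) (m + (-1))
          refine h1.trans ?_
          have h2 : wt (m + (-1)) ^ (ν - ((2:ℕ):ℝ)) ≤ Dk ^ |ν - ((2:ℕ):ℝ)| := by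
            apply wt_rpow_le_of_le (one_le_wt _) ?_
            unfold wt
            apply max_le ?_ hDk1
            have : (m:ℝ) + (-1) ≤ (k:ℝ) := by
              have : m ≤ (k:ℤ) := hmk
              have h3 : (m:ℝ) ≤ (k:ℝ) := by exact_mod_cast this
              linarith
            calc ((m + (-1) : ℤ):ℝ) = (m:ℝ) + (-1) := by push_cast; ring
              _ ≤ (k:ℝ) := this
              _ ≤ Dk := le_max_left _ _
          have h4 : ((2:ℕ):ℝ) = (2:ℝ) := by norm_num
          rw [h4] at h2 ⊢
          nlinarith [h2]
        have hb1 : |dplus^[1] b m| ≤ C * Dk ^ |ν-1| := by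
          have h1 := hb 1 (by omega) m
          refine h1.trans ?_
          have h2 : wt m ^ (ν - ((1:ℕ):ℝ)) ≤ Dk ^ |ν - ((1:ℕ):ℝ)| := by
            apply wt_rpow_le_of_le (one_le_wt _) ?_
            unfold wt
            apply max_le ?_ hDk1
            calc (m:ℝ) ≤ (k:ℝ) := by exact_mod_cast hmk
              _ ≤ Dk := le_max_left _ _
          have h4 : ((1:ℕ):ℝ) = (1:ℝ) := by norm_num
          rw [h4] at h2 ⊢
          nlinarith [h2]
        calc |Rsym m * dplus^[2] b (m + (-1)) + Ssym m * dplus^[1] b m|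
            ≤ |Rsym m| * |dplus^[2] b (m + (-1))| + |Ssym m| * |dplus^[1] b m| := by
              refine (abs_add_le _ _).trans ?_
              rw [abs_mul, abs_mul]
          _ ≤ 1 * (C * Dk ^ |ν-2|) + 1 * (C * Dk ^ |ν-1|) := by
              apply add_le_add
              · exact mul_le_mul hR1 hb2 (abs_nonneg _) one_pos.le
              · exact mul_le_mul hS1 hb1 (abs_nonneg _) one_pos.le
          _ = C * (Dk ^ |ν-2| + Dk ^ |ν-1|) := by ring
    have hcrude := dplus_iter_crude k (Pop b) (C * (Dk ^ |ν-2| + Dk ^ |ν-1|)) l hM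
    rw [hwt1, Real.one_rpow]
    calc |dplus^[k] (Pop b) l| ≤ 2^k * (C * (Dk ^ |ν-2| + Dk ^ |ν-1|)) := hcrude
      _ = cCr * C := by rw [hcCr]; ring
      _ ≤ (cL + cCr + 1) * C * 1 := by nlinarith

def Good (ν : ℝ) (K : ℕ) (C : ℝ) (b : ℤ → ℝ) : Prop :=
  ∀ k : ℕ, k ≤ K → ∀ l : ℤ, |dplus^[k] b l| ≤ C * wt l ^ (ν - (k:ℝ))

lemma step (ν : ℝ) (K : ℕ) : ∃ c > 0, ∀ C : ℝ, 0 ≤ C → ∀ b : ℤ → ℝ,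
    Good ν (K+2) C b → Good (ν-2) K (c*C) (Pop b) := by
  have h := fun k : ℕ => key ν k
  choose cf hcf0 hcf using h
  refine ⟨1 + ∑ j ∈ Finset.range (K+1), cf j, ?_, ?_⟩
  · have : 0 ≤ ∑ j ∈ Finset.range (K+1), cf j :=
      Finset.sum_nonneg fun j _ => le_of_lt (hcf0 j)
    linarith
  · intro C hC b hg k hk l
    have hb : ∀ j : ℕ, j ≤ k + 2 → ∀ x : ℤ, |dplus^[j] b x| ≤ C * wt x ^ (ν - (j:ℝ)) := by
      intro j hj x
      exact hg j (by omega) x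
    have h1 := hcf k C hC b hb l
    have h2 : cf k ≤ 1 + ∑ j ∈ Finset.range (K+1), cf j := by
      have h3 : cf k ≤ ∑ j ∈ Finset.range (K+1), cf j :=
        Finset.single_le_sum (fun j _ => le_of_lt (hcf0 j))
          (Finset.mem_range.mpr (by omega))
      linarith
    have hpow : (0:ℝ) < wt l ^ (ν - 2 - (k:ℝ)) := Real.rpow_pos_of_pos (wt_pos l) _
    have hexp : ν - 2 - (k:ℝ) = (ν - 2) - (k:ℝ) := by ring
    calc |dplus^[k] (Pop b) l| ≤ cf k * C * wt l ^ (ν - 2 - (k:ℝ)) := h1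
      _ ≤ (1 + ∑ j ∈ Finset.range (K+1), cf j) * C * wt l ^ (ν - 2 - (k:ℝ)) := by
          nlinarith [mul_nonneg hC (le_of_lt hpow)]
      _ = (1 + ∑ j ∈ Finset.range (K+1), cf j) * C * wt l ^ ((ν - 2) - (k:ℝ)) := by
          rw [hexp]

lemma iterStep : ∀ (n : ℕ) (ν : ℝ), ∃ c > 0, ∀ C : ℝ, 0 ≤ C → ∀ b : ℤ → ℝ,
    Good ν (2*n) C b → Good (ν - 2*(n:ℝ)) 0 (c*C) (Pop^[n] b) := by
  intro n
  induction n with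
  | zero =>
    intro ν
    refine ⟨1, one_pos, ?_⟩
    intro C hC b hg k hk l
    interval_cases k
    simp only [Function.iterate_zero, id_eq, one_mul]
    have := hg 0 le_rfl l
    simpa using this
  | succ n ih =>
    intro ν
    obtain ⟨c₁, hc₁, hstep⟩ := step ν (2*n)
    obtain ⟨c₂, hc₂, hiter⟩ := ih (ν - 2)
    refine ⟨c₂ * c₁, by positivity, ?_⟩
    intro C hC b hg k hk l
    have hg' : Good ν (2*n+2) C b := by
      intro j hj x
      exact hg j (by omega) x
    have h1 : Good (ν-2) (2*n) (c₁*C) (Pop b) := hstep C hC b hg'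
    have h2 : Good (ν - 2 - 2*(n:ℝ)) 0 (c₂*(c₁*C)) (Pop^[n] (Pop b)) :=
      hiter (c₁*C) (by positivity) (Pop b) h1
    interval_cases k
    have h3 := h2 0 le_rfl l
    rw [← Function.iterate_succ_apply] at h3
    have hexp : ν - 2 - 2*(n:ℝ) - ((0:ℕ):ℝ) = ν - 2*((n+1:ℕ):ℝ) - ((0:ℕ):ℝ) := by
      push_cast; ring
    rw [hexp] at h3
    calc |dplus^[0] (Pop^[n+1] b) l| ≤ c₂*(c₁*C) * wt l ^ (ν - 2*((n+1:ℕ):ℝ) - ((0:ℕ):ℝ)) := h3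
      _ = c₂*c₁*C * wt l ^ (ν - 2*((n+1:ℕ):ℝ) - ((0:ℕ):ℝ)) := by ring

lemma init (μ : ℝ) (N : ℕ) (A : ℝ) (hA : 0 < A) (a : ℤ → ℝ)
    (h0 : ∀ l : ℤ, l ≤ 0 → a l = 0)
    (h2 : ∀ k₁ k₂ : ℕ, k₁ + k₂ ≤ 2 * N → ∀ l : ℕ, 1 ≤ l →
      |(dminus^[k₁] (dplus^[k₂] a)) (l : ℤ)| ≤ A * (l : ℝ) ^ (μ - 2 * ((k₁ : ℝ) + k₂))) :
    Good μ (2*N) A a := by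
  intro k hk l
  rcases le_or_gt 1 l with hl | hl
  · -- l ≥ 1
    have hln : (1:ℕ) ≤ l.toNat := by omega
    have hcast : ((l.toNat : ℕ) : ℤ) = l := Int.toNat_of_nonneg (by omega)
    have h3 := h2 0 k (by omega) l.toNat hln
    simp only [Function.iterate_zero, id_eq] at h3
    rw [hcast] at h3
    have hcR : ((l.toNat : ℕ) : ℝ) = (l : ℝ) := by exact_mod_cast congrArg (Int.cast : ℤ → ℝ) hcast
    rw [hcR] at h3
    push_cast at h3
    have hwt : wt l = (l:ℝ) := wt_of_pos hl
    have hl1 : (1:ℝ) ≤ (l:ℝ) := by exact_mod_cast hl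
    have hmono : (l:ℝ) ^ (μ - 2 * ((0:ℝ) + (k:ℝ))) ≤ (l:ℝ) ^ (μ - (k:ℝ)) := by
      apply Real.rpow_le_rpow_of_exponent_le hl1
      have : (0:ℝ) ≤ (k:ℝ) := Nat.cast_nonneg k
      linarith
    rw [hwt]
    calc |dplus^[k] a l| ≤ A * (l:ℝ) ^ (μ - 2 * ((0:ℝ) + (k:ℝ))) := h3
      _ ≤ A * (l:ℝ) ^ (μ - (k:ℝ)) := by nlinarith
  · -- l ≤ 0
    rcases le_or_gt (l + k) 0 with hlk | hlk
    · -- everything vanishes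
      have hz : |dplus^[k] a l| ≤ 2^k * 0 := by
        apply dplus_iter_crude
        intro m hm1 hm2
        rw [h0 m (by omega)]
        simp
      have : |dplus^[k] a l| ≤ 0 := by simpa using hz
      have hpow : (0:ℝ) < wt l ^ (μ - (k:ℝ)) := Real.rpow_pos_of_pos (wt_pos l) _
      nlinarith
    · -- use backward differences at l = 1
      set k₁ : ℕ := (1 - l).toNat with hk₁def
      have hk₁cast : ((k₁ : ℕ) : ℤ) = 1 - l := Int.toNat_of_nonneg (by omega)
      have hk₁le : k₁ ≤ k := by omega
      set k₂ : ℕ := k - k₁ with hk₂def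
      have hsum : k₁ + k₂ = k := by omega
      have h3 := h2 k₁ k₂ (by omega) 1 le_rfl
      rw [dminus_iter] at h3
      rw [← Function.iterate_add_apply] at h3
      rw [hsum] at h3
      have hpt : ((1:ℕ):ℤ) - (k₁:ℤ) = l := by omega
      rw [hpt] at h3
      have hrhs : A * ((1:ℕ):ℝ) ^ (μ - 2 * ((k₁:ℝ) + (k₂:ℝ))) = A := by
        norm_num
      rw [hrhs] at h3
      have hwt : wt l = 1 := wt_of_nonpos (by omega)
      rw [hwt, Real.one_rpow, mul_one]
      exact h3

theorem stmt4 (μ : ℝ) (N : ℕ) (A : ℝ) (hA : 0 < A) :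
    ∃ C > 0, ∀ a : ℤ → ℝ,
      (∀ l : ℤ, l ≤ 0 → a l = 0) →
      (∀ l : ℕ, 1 ≤ l → |a (l : ℤ)| ≤ A * (l : ℝ) ^ μ) →
      (∀ k₁ k₂ : ℕ, k₁ + k₂ ≤ 2 * N → ∀ l : ℕ, 1 ≤ l →
        |(dminus^[k₁] (dplus^[k₂] a)) (l : ℤ)| ≤ A * (l : ℝ) ^ (μ - 2 * ((k₁ : ℝ) + k₂))) →
      ∀ l : ℕ, 1 ≤ l → |(Pop^[N] a) (l : ℤ)| ≤ C * (l : ℝ) ^ (μ - 2 * (N : ℝ)) := by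
  obtain ⟨c, hc, hiter⟩ := iterStep N μ
  refine ⟨c * A, by positivity, ?_⟩
  intro a h0 h1 h2 l hl
  have hg : Good μ (2*N) A a := init μ N A hA a h0 h2
  have h3 := hiter A (le_of_lt hA) a hg 0 le_rfl (l:ℤ)
  simp only [Function.iterate_zero, id_eq] at h3
  have hwt : wt (l:ℤ) = (l:ℝ) := by
    rw [wt_of_pos (by exact_mod_cast hl)]
    norm_cast
  rw [hwt] at h3
  have hexp : μ - 2*(N:ℝ) - ((0:ℕ):ℝ) = μ - 2*(N:ℝ) := by norm_num
  rw [hexp] at h3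
  calc |Pop^[N] a (l:ℤ)| ≤ c*A * (l:ℝ) ^ (μ - 2*(N:ℝ)) := h3
    _ = c*A * (l:ℝ) ^ (μ - 2*(N:ℝ)) := rfl
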